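/- Let G be a (2P_2 + P_1)-free graph with non-adjacent vertices u and v, let B_1 be the neighbours of u that are not neighbours of v, let B_2 be the neighbours of v that are not neighbours of u, and let C be the vertices adjacent to neither u nor v. Then for all b_1 ∈ B_1 and b_2 ∈ B_2 with b_1 not adjacent to b_2, every vertex of C is adjacent to b_1 or to b_2. -/

import Mathlib

open SimpleGraph

/-- `G` is `H`-free: there is no graph embedding of `H` into `G`. -/
def HFree {V W : Type*} (G : SimpleGraph V) (H : SimpleGraph W) : Prop :=
  IsEmpty (H ↪g G)

/-- The graph `2P₂ + P₁`: the disjoint union of two edges and an isolated vertex. -/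
def TwoP2PlusP1 : SimpleGraph ((Fin 2 ⊕ Fin 2) ⊕ Fin 1) :=
  (pathGraph 2 ⊕g pathGraph 2) ⊕g (⊥ : SimpleGraph (Fin 1))

/-- In a `(2P₂ + P₁)`-free graph with non-adjacent `u ≠ v`: if `b₁` is a neighbour of
`u` but not of `v`, `b₂` is a neighbour of `v` but not of `u`, and `b₁` is not
adjacent to `b₂`, then every vertex `c` adjacent to neither `u` nor `v`
(and distinct from them) is adjacent to `b₁` or to `b₂`. -/
theorem nonadjacent_pair_dominates {V : Type*} (G : SimpleGraph V)
    (hfree : HFree G TwoP2PlusP1) (u v : V) (hne : u ≠ v) (huv : ¬ G.Adj u v)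
    (b₁ b₂ : V) (hb₁u : G.Adj u b₁) (hb₁v : ¬ G.Adj v b₁)
    (hb₂v : G.Adj v b₂) (hb₂u : ¬ G.Adj u b₂) (hbb : ¬ G.Adj b₁ b₂)
    (c : V) (hcu : c ≠ u) (hcv : c ≠ v) (hcau : ¬ G.Adj u c) (hcav : ¬ G.Adj v c) :
    G.Adj b₁ c ∨ G.Adj b₂ c := by
  have h01 : (0:Fin 2) ⋖ 1 := by
    refine ⟨by decide, fun x hx hx' => ?_⟩
    fin_cases x <;> simp_all
  by_contra hcon
  push_neg at hcon
  obtain ⟨h1, h2⟩ := hcon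
  have hub₁ : u ≠ b₁ := G.ne_of_adj hb₁u
  have hvb₂ : v ≠ b₂ := G.ne_of_adj hb₂v
  have hub₂ : u ≠ b₂ := fun h => huv (h ▸ hb₂v).symm
  have hvb₁ : v ≠ b₁ := fun h => huv (by rw [h]; exact hb₁u)
  have hb₁b₂ : b₁ ≠ b₂ := fun h => hb₂u (h ▸ hb₁u)
  have hcb₁ : c ≠ b₁ := fun h => hcau (h ▸ hb₁u)
  have hcb₂ : c ≠ b₂ := fun h => hcav (h ▸ hb₂v)
  apply hfree.false
  refine ⟨⟨Sum.elim (Sum.elim ![u, b₁] ![v, b₂]) ![c], ?_⟩, ?_⟩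
  · intro a b
    fin_cases a <;> fin_cases b <;>
      simp_all [hub₁.symm, hvb₂.symm, hub₂.symm, hvb₁.symm, hb₁b₂.symm,
        hcb₁.symm, hcb₂.symm, hne.symm, hcu.symm, hcv.symm]
  · intro a b
    change G.Adj (Sum.elim (Sum.elim ![u, b₁] ![v, b₂]) ![c] a)
      (Sum.elim (Sum.elim ![u, b₁] ![v, b₂]) ![c] b) ↔ _
    fin_cases a <;> fin_cases b <;>
      simp_all [TwoP2PlusP1, pathGraph, G.adj_comm, Fin.ext_iff]
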